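/- Let G be a group, H a normal subgroup acting trivially on a G-module A, and Q = G/H with the induced action on A. Let Cor : H₁(H, A) → H₁(G, A) be the map induced by extending 1-cycles on H by zero to G, and let coinf : H₁(G, A) → H₁(Q, A) be the map induced by sending a 1-cycle x : G → A to the 1-cycle q ↦ ∑_{w ∈ G, wH = q} x(w). Then the sequence H₁(H, A) → H₁(G, A) → H₁(Q, A) → 0 is exact: coinf is surjective and its kernel equals the image of Cor. -/

import Mathlib

section Homology

/-- The map sending a finitely supported function `x : G →₀ A` to
`∑ g, (g⁻¹ • x g - x g)`; its kernel is the group of 1-cycles. -/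
noncomputable def paperCycleMap (G A : Type*) [Group G] [AddCommGroup A]
    [DistribMulAction G A] : (G →₀ A) →+ A :=
  Finsupp.liftAddHom fun g => DistribMulAction.toAddMonoidHom A g⁻¹ - AddMonoidHom.id A

/-- The group of 1-cycles: finitely supported `x : G →₀ A` with
`∑ g, g⁻¹ • x g = ∑ g, x g`. -/
noncomputable def paperZ1 (G A : Type*) [Group G] [AddCommGroup A]
    [DistribMulAction G A] : AddSubgroup (G →₀ A) :=
  (paperCycleMap G A).ker

/-- The boundary map of the inhomogeneous bar complex in degree 2: a basis element
`[g₁|g₂]` with coefficient `a` goes to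
`single g₂ (g₁⁻¹ • a) - single (g₁g₂) a + single g₁ a`. -/
noncomputable def paperBarD2 (G A : Type*) [Group G] [AddCommGroup A]
    [DistribMulAction G A] : ((G × G) →₀ A) →+ (G →₀ A) :=
  Finsupp.liftAddHom fun p =>
    (Finsupp.singleAddHom p.2).comp (DistribMulAction.toAddMonoidHom A p.1⁻¹)
      + Finsupp.singleAddHom p.1 - Finsupp.singleAddHom (p.1 * p.2)

/-- The group of 1-boundaries. -/
noncomputable def paperB1 (G A : Type*) [Group G] [AddCommGroup A]
    [DistribMulAction G A] : AddSubgroup (G →₀ A) :=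
  (paperBarD2 G A).range

/-- First group homology `H₁(G, A)`: 1-cycles modulo 1-boundaries. -/
noncomputable abbrev paperH1 (G A : Type*) [Group G] [AddCommGroup A]
    [DistribMulAction G A] :=
  paperZ1 G A ⧸ ((paperB1 G A).addSubgroupOf (paperZ1 G A))

end Homology

section Aux
variable {G A : Type*} [Group G] [AddCommGroup A] [DistribMulAction G A]

lemma paperCycleMap_single (g : G) (a : A) :
    paperCycleMap G A (Finsupp.single g a) = g⁻¹ • a - a := by
  simp [paperCycleMap, Finsupp.liftAddHom_apply_single]

lemma paperCycleMap_apply (x : G →₀ A) :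
    paperCycleMap G A x = x.sum fun g a => g⁻¹ • a - a := by
  rw [paperCycleMap, Finsupp.liftAddHom_apply]
  rfl

lemma paperBarD2_single (g₁ g₂ : G) (a : A) :
    paperBarD2 G A (Finsupp.single (g₁, g₂) a)
      = Finsupp.single g₂ (g₁⁻¹ • a) + Finsupp.single g₁ a
        - Finsupp.single (g₁ * g₂) a := by
  simp [paperBarD2, Finsupp.liftAddHom_apply_single]

lemma paperCycleMap_barD2 (z : (G × G) →₀ A) :
    paperCycleMap G A (paperBarD2 G A z) = 0 := by
  have h : (paperCycleMap G A).comp (paperBarD2 G A) = 0 := by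
    refine Finsupp.addHom_ext fun p a => ?_
    obtain ⟨g₁, g₂⟩ := p
    simp only [AddMonoidHom.comp_apply, paperBarD2_single, map_add, map_sub,
      paperCycleMap_single, mul_inv_rev, mul_smul, AddMonoidHom.zero_apply]
    abel
  simpa using DFunLike.congr_fun h z

lemma paperCycleMap_mapDomain {G' : Type*} (f : G' → G) (x : G' →₀ A) :
    paperCycleMap G A (Finsupp.mapDomain f x) = x.sum fun g a => (f g)⁻¹ • a - a := by
  rw [paperCycleMap_apply, Finsupp.sum_mapDomain_index]
  · simp
  · intro b m₁ m₂; rw [smul_add]; abel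

lemma mapDomain_apply_filter {α β M : Type*} [AddCommMonoid M] [DecidableEq β]
    (f : α → β) (x : α →₀ M) (b : β) :
    Finsupp.mapDomain f x b = ∑ w ∈ x.support.filter (fun w => f w = b), x w := by
  rw [Finsupp.mapDomain, Finsupp.sum_apply, Finsupp.sum, Finset.sum_filter]
  refine Finset.sum_congr rfl fun a _ => ?_
  rw [Finsupp.single_apply]

lemma mapDomain_sub' {α β M : Type*} [AddCommGroup M] (f : α → β) (v w : α →₀ M) :
    Finsupp.mapDomain f (v - w) = Finsupp.mapDomain f v - Finsupp.mapDomain f w := by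
  simp only [← Finsupp.mapDomain.addMonoidHom_apply, map_sub]

end Aux

/-- Let `G` be a group, `H` a normal subgroup acting trivially on the
`G`-module `A`, and `Q = G/H`.  With `Cor : H₁(H, A) → H₁(G, A)` induced by extension of
1-cycles by zero and `coinf : H₁(G, A) → H₁(Q, A)` induced by
`x ↦ (q ↦ ∑_{wH = q} x w)`, the sequence `H₁(H, A) → H₁(G, A) → H₁(Q, A) → 0` is exact:
`coinf` is surjective and its kernel is the image of `Cor`. -/
theorem stmt6 {G : Type} [Group G] (H : Subgroup G) [H.Normal] (A : Type) [AddCommGroup A]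
    [DistribMulAction G A] [DistribMulAction (G ⧸ H) A] [DecidableEq (G ⧸ H)]
    (hcomp : ∀ (g : G) (a : A), (g : G ⧸ H) • a = g • a)
    (htriv : ∀ h ∈ H, ∀ a : A, h • a = a)
    (Cor : paperH1 (↥H) A →+ paperH1 G A)
    (hCor : ∀ (x : paperZ1 (↥H) A) (xt : paperZ1 G A),
      (∀ h : ↥H, (xt : G →₀ A) (h : G) = (x : (↥H) →₀ A) h) →
      (∀ g : G, g ∉ H → (xt : G →₀ A) g = 0) →
      Cor (QuotientAddGroup.mk x) = QuotientAddGroup.mk xt)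
    (coinf : paperH1 G A →+ paperH1 (G ⧸ H) A)
    (hcoinf : ∀ (x : paperZ1 G A) (y : paperZ1 (G ⧸ H) A),
      (∀ q : G ⧸ H, (y : (G ⧸ H) →₀ A) q
          = ∑ w ∈ (x : G →₀ A).support.filter (fun w : G => (w : G ⧸ H) = q),
              (x : G →₀ A) w) →
      coinf (QuotientAddGroup.mk x) = QuotientAddGroup.mk y) :
    Function.Surjective coinf ∧ ∀ c : paperH1 G A, coinf c = 0 ↔ c ∈ Cor.range := by
  classical
  set π : G → G ⧸ H := fun g => (g : G ⧸ H) with hπdef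
  set s : G ⧸ H → G := Quotient.out with hsdef
  have hsπ : ∀ q, π (s q) = q := fun q => QuotientGroup.out_eq' q
  have hinv : ∀ (g : G) (a : A), (π g)⁻¹ • a = g⁻¹ • a := by
    intro g a
    have : (π g)⁻¹ = ((g⁻¹ : G) : G ⧸ H) := by
      simp [hπdef]
    rw [this, hcomp]
  -- pushforward of a cycle is a cycle
  have hQcycle : ∀ x : G →₀ A, x ∈ paperZ1 G A →
      Finsupp.mapDomain π x ∈ paperZ1 (G ⧸ H) A := by
    intro x hx
    have hx' : paperCycleMap G A x = 0 := hx
    show paperCycleMap (G ⧸ H) A _ = 0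
    rw [paperCycleMap_mapDomain]
    have he : (x.sum fun g a => (π g)⁻¹ • a - a) = x.sum fun g a => g⁻¹ • a - a :=
      Finsupp.sum_congr fun g _ => by rw [hinv]
    rw [he, ← paperCycleMap_apply, hx']
  -- coinf computed via mapDomain
  have hco : ∀ (x : paperZ1 G A) (hq : Finsupp.mapDomain π (x : G →₀ A) ∈ paperZ1 (G ⧸ H) A),
      coinf (QuotientAddGroup.mk x)
        = QuotientAddGroup.mk (⟨Finsupp.mapDomain π (x : G →₀ A), hq⟩ : paperZ1 (G ⧸ H) A) := by
    intro x hq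
    exact hcoinf x ⟨_, hq⟩ fun q => mapDomain_apply_filter π (x : G →₀ A) q
  constructor
  · -- surjectivity
    intro c
    obtain ⟨y, rfl⟩ := QuotientAddGroup.mk_surjective c
    set x0 : G →₀ A := Finsupp.mapDomain s (y : (G ⧸ H) →₀ A) with hx0def
    have hycyc : paperCycleMap (G ⧸ H) A (y : (G ⧸ H) →₀ A) = 0 := y.2
    have hx0 : x0 ∈ paperZ1 G A := by
      show paperCycleMap G A x0 = 0
      rw [hx0def, paperCycleMap_mapDomain]
      have he : ((y : (G ⧸ H) →₀ A).sum fun q a => (s q)⁻¹ • a - a)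
          = (y : (G ⧸ H) →₀ A).sum fun q a => q⁻¹ • a - a :=
        Finsupp.sum_congr fun q _ => by rw [← hinv, hsπ]
      rw [he, ← paperCycleMap_apply, hycyc]
    have hmd : Finsupp.mapDomain π x0 = (y : (G ⧸ H) →₀ A) := by
      rw [hx0def, ← Finsupp.mapDomain_comp, show π ∘ s = id from funext hsπ,
        Finsupp.mapDomain_id]
    refine ⟨QuotientAddGroup.mk ⟨x0, hx0⟩, ?_⟩
    rw [hco ⟨x0, hx0⟩ (hmd ▸ y.2)]
    exact congrArg _ (Subtype.ext hmd)
  · intro c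
    constructor
    · -- kernel ⊆ range
      intro h0
      obtain ⟨x, rfl⟩ := QuotientAddGroup.mk_surjective c
      have hq := hQcycle _ x.2
      rw [hco x hq, QuotientAddGroup.eq_zero_iff, AddSubgroup.mem_addSubgroupOf, paperB1,
        AddMonoidHom.mem_range] at h0
      obtain ⟨z, hz⟩ := h0
      have hz' : paperBarD2 (G ⧸ H) A z = Finsupp.mapDomain π (x : G →₀ A) := hz
      -- key compatibility of the bar differential with the section
      have hkey : ∀ u : ((G ⧸ H) × (G ⧸ H)) →₀ A,
          Finsupp.mapDomain π (paperBarD2 G A (Finsupp.mapDomain (Prod.map s s) u))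
            = paperBarD2 (G ⧸ H) A u := by
        intro u
        induction u using Finsupp.induction_linear with
        | zero => simp
        | add f g hf hg =>
          rw [Finsupp.mapDomain_add, map_add, Finsupp.mapDomain_add, hf, hg, map_add]
        | single p a =>
          obtain ⟨p, q⟩ := p
          rw [Finsupp.mapDomain_single, Prod.map_apply, paperBarD2_single, paperBarD2_single]
          rw [mapDomain_sub', Finsupp.mapDomain_add, Finsupp.mapDomain_single,
            Finsupp.mapDomain_single, Finsupp.mapDomain_single]
          rw [show π (s p * s q) = p * q from by
            rw [show π (s p * s q) = π (s p) * π (s q) from rfl, hsπ, hsπ]]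
          rw [hsπ, hsπ]
          rw [show (s p)⁻¹ • a = p⁻¹ • a from by rw [← hinv (s p) a, hsπ]]
      set zt : (G × G) →₀ A := Finsupp.mapDomain (Prod.map s s) z with hztdef
      set x2 : G →₀ A := (x : G →₀ A) - paperBarD2 G A zt with hx2def
      have hx2Q : Finsupp.mapDomain π x2 = 0 := by
        rw [hx2def, mapDomain_sub', hztdef, hkey, hz', sub_self]
      set t : G → G := fun g => (s (π g))⁻¹ * g with htdef
      have htH : ∀ g : G, t g ∈ H := fun g => (QuotientGroup.eq).mp (hsπ (π g))
      set w : G →₀ A := x2.sum fun g a => Finsupp.single (t g) ((s (π g))⁻¹ • a) with hwdef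
      set ζ : (G × G) →₀ A := x2.sum fun g a => Finsupp.single (s (π g), t g) a with hζdef
      have hd2ζ : paperBarD2 G A ζ = w + Finsupp.mapDomain (s ∘ π) x2 - x2 := by
        rw [hζdef, map_finsuppSum]
        have he : (x2.sum fun g a => paperBarD2 G A (Finsupp.single (s (π g), t g) a))
            = x2.sum fun g a =>
                (Finsupp.single (t g) ((s (π g))⁻¹ • a) + Finsupp.single (s (π g)) a)
                  - Finsupp.single g a :=
          Finsupp.sum_congr fun g _ => by rw [paperBarD2_single, htdef, mul_inv_cancel_left]
        rw [he, Finsupp.sum_sub, Finsupp.sum_add, Finsupp.sum_single, hwdef]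
        rfl
      have hmd0 : Finsupp.mapDomain (s ∘ π) x2 = 0 := by
        rw [Finsupp.mapDomain_comp, hx2Q, Finsupp.mapDomain_zero]
      have hw : w = x2 + paperBarD2 G A ζ := by rw [hd2ζ, hmd0]; abel
      have hwH : ∀ g : G, g ∉ H → w g = 0 := by
        intro g hg
        rw [hwdef, Finsupp.sum_apply, Finsupp.sum]
        refine Finset.sum_eq_zero fun g' _ => ?_
        rw [Finsupp.single_apply, if_neg]
        exact fun he => hg (he ▸ htH g')
      have hx2Z : paperCycleMap G A x2 = 0 := by
        rw [hx2def, map_sub, paperCycleMap_barD2, sub_zero]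
        exact x.2
      have hwZ : w ∈ paperZ1 G A := by
        show paperCycleMap G A w = 0
        rw [hw, map_add, paperCycleMap_barD2, add_zero, hx2Z]
      set x' : ↥H →₀ A := Finsupp.subtypeDomain (· ∈ H) w with hx'def
      have hx' : x' ∈ paperZ1 (↥H) A := by
        show paperCycleMap (↥H) A x' = 0
        rw [paperCycleMap_apply, Finsupp.sum]
        refine Finset.sum_eq_zero fun h _ => ?_
        rw [show (h⁻¹ : ↥H) • (x' h) = x' h from by
          rw [Submonoid.smul_def]; exact htriv _ (h⁻¹).2 _, sub_self]
      refine ⟨QuotientAddGroup.mk ⟨x', hx'⟩, ?_⟩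
      rw [hCor ⟨x', hx'⟩ ⟨w, hwZ⟩ (fun h => (Finsupp.subtypeDomain_apply).symm) hwH]
      rw [QuotientAddGroup.eq, AddSubgroup.mem_addSubgroupOf]
      refine ⟨zt - ζ, ?_⟩
      rw [map_sub]
      have e1 : paperBarD2 G A ζ = w - x2 := by rw [hw]; abel
      have e2 : paperBarD2 G A zt = (x : G →₀ A) - x2 := by rw [hx2def]; abel
      rw [e1, e2]
      show _ = -w + (x : G →₀ A)
      abel
    · -- range ⊆ kernel
      rintro ⟨d, rfl⟩
      obtain ⟨x, rfl⟩ := QuotientAddGroup.mk_surjective d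
      have hxt : Finsupp.mapDomain (Subtype.val) (x : ↥H →₀ A) ∈ paperZ1 G A := by
        show paperCycleMap G A _ = 0
        rw [paperCycleMap_mapDomain, Finsupp.sum]
        refine Finset.sum_eq_zero fun h _ => ?_
        rw [show ((h : G))⁻¹ • ((x : ↥H →₀ A) h) = (x : ↥H →₀ A) h from
          htriv _ (H.inv_mem h.2) _, sub_self]
      rw [hCor x ⟨_, hxt⟩
        (fun h => Finsupp.mapDomain_apply Subtype.val_injective _ h)
        (fun g hg => Finsupp.mapDomain_notin_range _ g (by simpa using hg))]
      rw [hco ⟨_, hxt⟩ (hQcycle _ hxt)]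
      rw [QuotientAddGroup.eq_zero_iff, AddSubgroup.mem_addSubgroupOf]
      refine ⟨Finsupp.mapDomain (fun _ : ↥H => ((1 : G ⧸ H), (1 : G ⧸ H))) (x : ↥H →₀ A), ?_⟩
      show paperBarD2 (G ⧸ H) A _
        = Finsupp.mapDomain π (Finsupp.mapDomain (Subtype.val) (x : ↥H →₀ A))
      rw [← Finsupp.mapDomain_comp,
        show π ∘ (Subtype.val : ↥H → G) = fun _ => (1 : G ⧸ H) from
          funext fun h => (QuotientGroup.eq_one_iff (h : G)).mpr h.2]
      rw [Finsupp.mapDomain, Finsupp.mapDomain, map_finsuppSum]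
      refine Finsupp.sum_congr fun h _ => ?_
      rw [paperBarD2_single]
      simp
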